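/- Let h : ℝ² → ℝ be of class C² with h(x+1, x̄+1) = h(x, x̄) and h₁₂(x, x̄) < 0 for all (x, x̄) ∈ ℝ². Let φ : ℝ → ℝ be an increasing bi-Lipschitz homeomorphism with φ(x+1) = φ(x) + 1 satisfying h₂(φ⁻¹(x), x) + h₁(x, φ(x)) = 0 for all x ∈ ℝ. Define a(x) = h₂₂(φ⁻¹(x), x) + h₁₁(x, φ(x)) and b(x) = −h₁₂(φ⁻¹(x), x). Then for every x ∈ ℝ, a(x) ≥ b(φ(x))·(essinf φ') + b(x)/(esssup φ') > 0. -/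

import Mathlib

open MeasureTheory

/-- Partial derivative of `h` with respect to its first argument. -/
noncomputable def h1 (h : ℝ → ℝ → ℝ) (x y : ℝ) : ℝ := deriv (fun u => h u y) x

/-- Partial derivative of `h` with respect to its second argument. -/
noncomputable def h2 (h : ℝ → ℝ → ℝ) (x y : ℝ) : ℝ := deriv (fun v => h x v) y

/-- Second partial derivative of `h` with respect to its first argument, twice. -/
noncomputable def h11 (h : ℝ → ℝ → ℝ) (x y : ℝ) : ℝ := deriv (fun u => h1 h u y) x

/-- Mixed second partial derivative of `h`. -/
noncomputable def h12 (h : ℝ → ℝ → ℝ) (x y : ℝ) : ℝ := deriv (fun v => h1 h x v) y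

/-- Second partial derivative of `h` with respect to its second argument, twice. -/
noncomputable def h22 (h : ℝ → ℝ → ℝ) (x y : ℝ) : ℝ := deriv (fun v => h2 h x v) y

/-! ### Auxiliary material -/

/-- Directional partial derivative of a function on the plane. -/
noncomputable def pdv (F : ℝ × ℝ → ℝ) (v : ℝ × ℝ) (p : ℝ × ℝ) : ℝ := fderiv ℝ F p v

lemma hasDerivAt_pdv_fst (F : ℝ × ℝ → ℝ) (x y : ℝ)
    (hF : DifferentiableAt ℝ F (x, y)) :
    HasDerivAt (fun u => F (u, y)) (pdv F (1, 0) (x, y)) x := by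
  have hc : HasDerivAt (fun u : ℝ => ((u, y) : ℝ × ℝ)) ((1 : ℝ), (0 : ℝ)) x :=
    (hasDerivAt_id x).prodMk (hasDerivAt_const x y)
  exact hF.hasFDerivAt.comp_hasDerivAt x hc

lemma hasDerivAt_pdv_snd (F : ℝ × ℝ → ℝ) (x y : ℝ)
    (hF : DifferentiableAt ℝ F (x, y)) :
    HasDerivAt (fun v => F (x, v)) (pdv F (0, 1) (x, y)) y := by
  have hc : HasDerivAt (fun v : ℝ => ((x, v) : ℝ × ℝ)) ((0 : ℝ), (1 : ℝ)) y :=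
    (hasDerivAt_const y x).prodMk (hasDerivAt_id y)
  exact hF.hasFDerivAt.comp_hasDerivAt y hc

lemma contDiff_pdv {n m : WithTop ℕ∞} (F : ℝ × ℝ → ℝ) (v : ℝ × ℝ)
    (hF : ContDiff ℝ n F) (hmn : m + 1 ≤ n) : ContDiff ℝ m (pdv F v) := by
  exact (ContinuousLinearMap.apply ℝ ℝ v).contDiff.comp (hF.fderiv_right hmn)

lemma fderiv_pdv (F : ℝ × ℝ → ℝ) (v : ℝ × ℝ) (p : ℝ × ℝ)
    (hF : DifferentiableAt ℝ (fderiv ℝ F) p) (w : ℝ × ℝ) :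
    fderiv ℝ (pdv F v) p w = fderiv ℝ (fderiv ℝ F) p w v := by
  have : HasFDerivAt (pdv F v)
      ((ContinuousLinearMap.apply ℝ ℝ v).comp (fderiv ℝ (fderiv ℝ F) p)) p :=
    (ContinuousLinearMap.apply ℝ ℝ v).hasFDerivAt.comp p hF.hasFDerivAt
  rw [this.fderiv]; rfl

/-- on an invariant curve, for every `x`,
`a(x) ≥ b(φ(x))·(essinf φ') + b(x)/(esssup φ') > 0`. -/
theorem second_variation_lower_bound (h : ℝ → ℝ → ℝ)
    (hC2 : ContDiff ℝ 2 (fun p : ℝ × ℝ => h p.1 p.2))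
    (hper : ∀ x y, h (x + 1) (y + 1) = h x y)
    (htwist : ∀ x y, h12 h x y < 0)
    (φ ψ : ℝ → ℝ) (hmono : StrictMono φ) (K : NNReal)
    (hlip : LipschitzWith K φ) (halip : AntilipschitzWith K φ)
    (hlinv : Function.LeftInverse ψ φ) (hrinv : Function.RightInverse ψ φ)
    (hcomm : ∀ x, φ (x + 1) = φ x + 1)
    (hEL : ∀ x, h2 h (ψ x) x + h1 h x (φ x) = 0)
    (a b : ℝ → ℝ)
    (ha : ∀ x, a x = h22 h (ψ x) x + h11 h x (φ x))
    (hb : ∀ x, b x = -h12 h (ψ x) x) :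
    ∀ x : ℝ,
      0 < b (φ x) * essInf (deriv φ) volume + b x / essSup (deriv φ) volume ∧
      b (φ x) * essInf (deriv φ) volume + b x / essSup (deriv φ) volume ≤ a x := by
  classical
  set H : ℝ × ℝ → ℝ := fun p => h p.1 p.2 with hH
  -- basic smoothness facts
  have hHd : Differentiable ℝ H := hC2.differentiable (by norm_num)
  have hH1 : ContDiff ℝ 1 (pdv H (1, 0)) := contDiff_pdv H _ hC2 (by norm_num)
  have hH2 : ContDiff ℝ 1 (pdv H (0, 1)) := contDiff_pdv H _ hC2 (by norm_num)
  have hfd : Differentiable ℝ (fderiv ℝ H) :=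
    (hC2.fderiv_right (m := 1) (by norm_num)).differentiable one_ne_zero
  -- first partial derivatives
  have h1e : ∀ x y, h1 h x y = pdv H (1, 0) (x, y) := fun x y =>
    (hasDerivAt_pdv_fst H x y (hHd _)).deriv
  have h2e : ∀ x y, h2 h x y = pdv H (0, 1) (x, y) := fun x y =>
    (hasDerivAt_pdv_snd H x y (hHd _)).deriv
  -- second partial derivatives
  have h11e : ∀ x y, h11 h x y = pdv (pdv H (1, 0)) (1, 0) (x, y) := by
    intro x y
    have : (fun u => h1 h u y) = fun u => pdv H (1, 0) (u, y) := funext fun u => h1e u y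
    rw [h11, this]
    exact (hasDerivAt_pdv_fst _ x y ((hH1.differentiable one_ne_zero) _)).deriv
  have h12e : ∀ x y, h12 h x y = pdv (pdv H (1, 0)) (0, 1) (x, y) := by
    intro x y
    have : (fun v => h1 h x v) = fun v => pdv H (1, 0) (x, v) := funext fun v => h1e x v
    rw [h12, this]
    exact (hasDerivAt_pdv_snd _ x y ((hH1.differentiable one_ne_zero) _)).deriv
  have h22e : ∀ x y, h22 h x y = pdv (pdv H (0, 1)) (0, 1) (x, y) := by
    intro x y
    have : (fun v => h2 h x v) = fun v => pdv H (0, 1) (x, v) := funext fun v => h2e x v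
    rw [h22, this]
    exact (hasDerivAt_pdv_snd _ x y ((hH2.differentiable one_ne_zero) _)).deriv
  -- symmetry of second derivatives
  have hsymm : ∀ p : ℝ × ℝ, pdv (pdv H (0, 1)) (1, 0) p = pdv (pdv H (1, 0)) (0, 1) p := by
    intro p
    have hs : IsSymmSndFDerivAt ℝ H p := hC2.contDiffAt.isSymmSndFDerivAt (by norm_num)
    have e1 : pdv (pdv H (0, 1)) (1, 0) p = fderiv ℝ (fderiv ℝ H) p (1, 0) (0, 1) :=
      fderiv_pdv H _ p (hfd p) _
    have e2 : pdv (pdv H (1, 0)) (0, 1) p = fderiv ℝ (fderiv ℝ H) p (0, 1) (1, 0) :=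
      fderiv_pdv H _ p (hfd p) _
    rw [e1, e2, hs]
  -- positivity of b
  have K0 : (1 : ℝ) ≤ (K : ℝ) := by
    have h1' := halip.le_mul_dist 0 1
    have h2' := hlip.dist_le_mul 0 1
    have hd01 : dist (0 : ℝ) 1 = 1 := by simp [Real.dist_eq]
    rw [hd01] at h1' h2'
    nlinarith [NNReal.coe_nonneg K, dist_nonneg (x := φ 0) (y := φ 1)]
  have Kpos : (0 : ℝ) < (K : ℝ) := lt_of_lt_of_le one_pos K0
  have bpos : ∀ z, 0 < b z := by
    intro z
    rw [hb]
    linarith [htwist (ψ z) z]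
  -- pointwise derivative bounds for φ
  have hbounds : ∀ x : ℝ, DifferentiableAt ℝ φ x →
      (K : ℝ)⁻¹ ≤ deriv φ x ∧ deriv φ x ≤ (K : ℝ) := by
    intro x hd
    have htend : Filter.Tendsto (slope φ x) (nhdsWithin x (Set.Ioi x)) (nhds (deriv φ x)) :=
      (hasDerivAt_iff_tendsto_slope.1 hd.hasDerivAt).mono_left
        (nhdsWithin_mono x fun z hz => ne_of_gt hz)
    have hev : ∀ z ∈ Set.Ioi x,
        (K : ℝ)⁻¹ ≤ slope φ x z ∧ slope φ x z ≤ (K : ℝ) := by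
      intro z hz
      have hzx : (0 : ℝ) < z - x := sub_pos.2 hz
      have hφ : (0 : ℝ) < φ z - φ x := sub_pos.2 (hmono hz)
      have hlow : z - x ≤ (K : ℝ) * (φ z - φ x) := by
        have := halip.le_mul_dist z x
        rw [Real.dist_eq, Real.dist_eq, abs_of_pos hzx, abs_of_pos hφ] at this
        exact this
      have hup : φ z - φ x ≤ (K : ℝ) * (z - x) := by
        have := hlip.dist_le_mul z x
        rw [Real.dist_eq, Real.dist_eq, abs_of_pos hzx, abs_of_pos hφ] at this
        exact this
      have hKK : (K : ℝ) * (K : ℝ)⁻¹ = 1 := mul_inv_cancel₀ (ne_of_gt Kpos)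
      constructor
      · rw [slope_def_field, le_div_iff₀ hzx]
        nlinarith
      · rw [slope_def_field, div_le_iff₀ hzx]
        nlinarith
    constructor
    · exact ge_of_tendsto htend
        (Filter.eventually_iff_exists_mem.2
          ⟨Set.Ioi x, self_mem_nhdsWithin, fun z hz => (hev z hz).1⟩)
    · exact le_of_tendsto htend
        (Filter.eventually_iff_exists_mem.2
          ⟨Set.Ioi x, self_mem_nhdsWithin, fun z hz => (hev z hz).2⟩)
  -- a.e. differentiability
  have hdiff_ae : ∀ᵐ x, DifferentiableAt ℝ φ x := hlip.ae_differentiableAt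
  have hae_bdd : ∀ᵐ x, (K : ℝ)⁻¹ ≤ deriv φ x ∧ deriv φ x ≤ (K : ℝ) :=
    hdiff_ae.mono fun x hx => hbounds x hx
  set m := essInf (deriv φ) volume with hm
  set M := essSup (deriv φ) volume with hM
  haveI : (ae (volume : Measure ℝ)).NeBot := by
    refine MeasureTheory.ae_neBot.2 fun h0 => ?_
    have h01 := congrArg (fun μ : Measure ℝ => μ (Set.Icc 0 1)) h0
    simp [Real.volume_Icc] at h01
  have hbdd_above : Filter.IsBoundedUnder (· ≤ ·) (ae volume) (deriv φ) :=
    ⟨(K : ℝ), Filter.eventually_map.2 (hae_bdd.mono fun x hx => hx.2)⟩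
  have hbdd_below : Filter.IsBoundedUnder (· ≥ ·) (ae volume) (deriv φ) :=
    ⟨(K : ℝ)⁻¹, Filter.eventually_map.2 (hae_bdd.mono fun x hx => hx.1)⟩
  have hmK : (K : ℝ)⁻¹ ≤ m :=
    Filter.le_liminf_of_le hbdd_above.isCoboundedUnder_ge (hae_bdd.mono fun x hx => hx.1)
  have hmM : m ≤ M := Filter.liminf_le_limsup hbdd_above hbdd_below
  have hm0 : 0 < m := lt_of_lt_of_le (inv_pos.2 Kpos) hmK
  have hM0 : 0 < M := lt_of_lt_of_le hm0 hmM
  have hae_leM : ∀ᵐ x, deriv φ x ≤ M := ae_le_essSup hbdd_above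
  have hae_mle : ∀ᵐ x, m ≤ deriv φ x := ae_essInf_le hbdd_below
  -- Lipschitz images of null sets are null
  have himage_null : ∀ s : Set ℝ, volume s = 0 → volume (φ '' s) = 0 := by
    intro s hs
    have h1' := hlip.hausdorffMeasure_image_le (zero_le_one (α := ℝ)) s
    rw [MeasureTheory.hausdorffMeasure_real] at h1'
    refine le_antisymm (h1'.trans ?_) (zero_le')
    rw [hs, mul_zero]
  -- the good set for ψ
  set S : Set ℝ := {y | HasDerivAt φ (deriv φ y) y ∧ (K : ℝ)⁻¹ ≤ deriv φ y ∧ deriv φ y ≤ M}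
    with hSdef
  have hS : ∀ᵐ y, y ∈ S := by
    filter_upwards [hdiff_ae, hae_bdd, hae_leM] with y hy hby hMy
    exact ⟨hy.hasDerivAt, hby.1, hMy⟩
  have hT : ∀ᵐ x, ψ x ∈ S := by
    rw [MeasureTheory.ae_iff]
    refine measure_mono_null (fun x hx => ?_) (himage_null Sᶜ ?_)
    · exact ⟨ψ x, hx, hrinv x⟩
    · exact (MeasureTheory.ae_iff.1 hS)
  have hψlip : LipschitzWith K ψ := halip.to_rightInverse hrinv
  -- main identity: a x = ψ' x * b x + φ' x * b (φ x) a.e.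
  have hmain : ∀ᵐ x, b (φ x) * m + b x / M ≤ a x := by
    filter_upwards [hdiff_ae, hae_mle, hT] with x hdx hmx hsx
    set p := deriv φ x with hpd
    have hp : HasDerivAt φ p x := hdx.hasDerivAt
    set c := deriv φ (ψ x) with hcd
    have hc : HasDerivAt φ c (ψ x) := hsx.1
    have hc0 : 0 < c := lt_of_lt_of_le (inv_pos.2 Kpos) hsx.2.1
    have hcM : c ≤ M := hsx.2.2
    have hq : HasDerivAt ψ c⁻¹ x :=
      HasDerivAt.of_local_left_inverse (hψlip.continuous.continuousAt) hc hc0.ne'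
        (Filter.Eventually.of_forall hrinv)
    -- derivative of the Euler-Lagrange relation
    have hcurve1 : HasDerivAt (fun z => ((ψ z, z) : ℝ × ℝ)) (c⁻¹, 1) x :=
      hq.prodMk (hasDerivAt_id x)
    have hcurve2 : HasDerivAt (fun z => ((z, φ z) : ℝ × ℝ)) (1, p) x :=
      (hasDerivAt_id x).prodMk hp
    have d2 : HasDerivAt (fun z => pdv H (0, 1) (ψ z, z))
        (fderiv ℝ (pdv H (0, 1)) (ψ x, x) (c⁻¹, 1)) x :=
      ((hH2.differentiable one_ne_zero) _).hasFDerivAt.comp_hasDerivAt x hcurve1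
    have d1 : HasDerivAt (fun z => pdv H (1, 0) (z, φ z))
        (fderiv ℝ (pdv H (1, 0)) (x, φ x) (1, p)) x :=
      ((hH1.differentiable one_ne_zero) _).hasFDerivAt.comp_hasDerivAt x hcurve2
    have dF : HasDerivAt (fun z => pdv H (0, 1) (ψ z, z) + pdv H (1, 0) (z, φ z))
        (fderiv ℝ (pdv H (0, 1)) (ψ x, x) (c⁻¹, 1) +
          fderiv ℝ (pdv H (1, 0)) (x, φ x) (1, p)) x := d2.add d1
    have hF0 : (fun z => pdv H (0, 1) (ψ z, z) + pdv H (1, 0) (z, φ z)) =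
        fun _ => (0 : ℝ) := by
      funext z
      have := hEL z
      rw [h2e, h1e] at this
      exact this
    have hzero : fderiv ℝ (pdv H (0, 1)) (ψ x, x) (c⁻¹, 1) +
        fderiv ℝ (pdv H (1, 0)) (x, φ x) (1, p) = 0 := by
      have h0 : HasDerivAt (fun _ : ℝ => (0 : ℝ)) 0 x := hasDerivAt_const x 0
      rw [hF0] at dF
      exact dF.unique h0
    -- expand the linear maps
    have hex2 : fderiv ℝ (pdv H (0, 1)) (ψ x, x) (c⁻¹, 1) =
        c⁻¹ * h12 h (ψ x) x + h22 h (ψ x) x := by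
      have hv : ((c⁻¹ : ℝ), (1 : ℝ)) = c⁻¹ • ((1 : ℝ), (0 : ℝ)) + ((0 : ℝ), (1 : ℝ)) := by
        simp
      rw [hv, map_add, _root_.map_smul]
      rw [h12e, h22e]
      rw [← hsymm (ψ x, x)]
      rfl
    have hex1 : fderiv ℝ (pdv H (1, 0)) (x, φ x) (1, p) =
        h11 h x (φ x) + p * h12 h x (φ x) := by
      have hv : ((1 : ℝ), (p : ℝ)) = ((1 : ℝ), (0 : ℝ)) + p • ((0 : ℝ), (1 : ℝ)) := by
        simp
      rw [hv, map_add, _root_.map_smul]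
      rw [h11e, h12e]
      rfl
    rw [hex2, hex1] at hzero
    have haval : a x = c⁻¹ * b x + p * b (φ x) := by
      rw [ha, hb, hb, hlinv x]
      ring_nf
      nlinarith [hzero]
    rw [haval]
    have hbx := bpos x
    have hbφx := bpos (φ x)
    have hinv : M⁻¹ ≤ c⁻¹ := by
      exact inv_anti₀ hc0 hcM
    have e1 : b x / M ≤ c⁻¹ * b x := by
      rw [div_eq_mul_inv]
      nlinarith
    have e2 : b (φ x) * m ≤ p * b (φ x) := by nlinarith
    linarith
  -- continuity of the relevant functions
  have hcontψ : Continuous ψ := hψlip.continuous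
  have hcontφ : Continuous φ := hlip.continuous
  have hcpd : ∀ v w : ℝ × ℝ, Continuous (pdv (pdv H v) w) := by
    intro v w
    have : ContDiff ℝ 0 (pdv (pdv H v) w) :=
      contDiff_pdv (m := 0) _ _ (contDiff_pdv (m := 1) H v hC2 (by norm_num)) (by norm_num)
    exact this.continuous
  have hconta : Continuous a := by
    have : Continuous fun x => pdv (pdv H (0, 1)) (0, 1) (ψ x, x) +
        pdv (pdv H (1, 0)) (1, 0) (x, φ x) :=
      ((hcpd _ _).comp (hcontψ.prodMk continuous_id)).add
        ((hcpd _ _).comp (continuous_id.prodMk hcontφ))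
    refine this.congr fun x => ?_
    rw [ha, h22e, h11e]
  have hcontb : Continuous b := by
    have : Continuous fun x => -pdv (pdv H (1, 0)) (0, 1) (ψ x, x) :=
      ((hcpd _ _).comp (hcontψ.prodMk continuous_id)).neg
    refine this.congr fun x => ?_
    rw [hb, h12e]
  -- from a.e. inequality to everywhere, by continuity
  have hall : ∀ x, b (φ x) * m + b x / M ≤ a x := by
    intro x
    by_contra hcon
    push_neg at hcon
    set U : Set ℝ := {z | a z - (b (φ z) * m + b z / M) < 0} with hU
    have hUopen : IsOpen U := by
      have : Continuous fun z => a z - (b (φ z) * m + b z / M) :=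
        hconta.sub (((hcontb.comp hcontφ).mul continuous_const).add
          (hcontb.div_const M))
      exact isOpen_lt this continuous_const
    have hUnull : volume U = 0 := by
      refine measure_mono_null (fun z hz => ?_) (MeasureTheory.ae_iff.1 hmain)
      simp only [hU, Set.mem_setOf_eq, not_le] at hz ⊢
      linarith
    have : U.Nonempty := ⟨x, by simp only [hU, Set.mem_setOf_eq]; linarith⟩
    exact absurd hUnull (hUopen.measure_pos volume this).ne'
  intro x
  refine ⟨?_, hall x⟩
  have p1 : 0 < b (φ x) * m := mul_pos (bpos (φ x)) hm0
  have p2 : 0 < b x / M := div_pos (bpos x) hM0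
  linarith
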